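/- For any first-order grammar G, let F = F(x₁) be a regular term with F ≠ x₁, let W be a regular term satisfying W = F(W) (i.e., W equals the result of substituting W for x₁ in F), and let T be a ground regular term. If T ∼_k F(T) in L_G then T ∼_k W; hence T ∼ F(T) implies T ∼ W. -/

import Mathlib

namespace FOGPaper

variable {S A : Type*}

/-- Extension of the single-step transition relations to words. -/
def Steps (tr : A → S → S → Prop) : List A → S → S → Prop
  | [], s, t => t = s
  | a :: w, s, t => ∃ s', tr a s s' ∧ Steps tr w s' t

/-- The trace set of a state: the finite words it enables. -/
def traces (tr : A → S → S → Prop) (s : S) : Set (List A) :=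
  {w | ∃ t, Steps tr w s t}

/-- The traces of length at most `k`. -/
def tracesLe (tr : A → S → S → Prop) (k : ℕ) (s : S) : Set (List A) :=
  {w ∈ traces tr s | w.length ≤ k}

/-- `r ∼ₖ s` : `r` and `s` enable the same words of length at most `k`. -/
def SimK (tr : A → S → S → Prop) (k : ℕ) (r s : S) : Prop :=
  tracesLe tr k r = tracesLe tr k s

/-- `r ∼ s` : trace equivalence. -/
def Sim (tr : A → S → S → Prop) (r s : S) : Prop :=
  traces tr r = traces tr s

/-- The equivalence level in ℕ ∪ {ω}: the supremum of the `k` with `r ∼ₖ s`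
(equal to `k` iff `r ∼ₖ s` and not `r ∼ₖ₊₁ s`, and to `ω = ⊤` iff `r ∼ s`). -/
noncomputable def eqLevel (tr : A → S → S → Prop) (r s : S) : ℕ∞ :=
  ⨆ k ∈ {k : ℕ | SimK tr k r s}, (k : ℕ∞)

/-- The offending words for `(r,s)` : the shortest words lying in exactly one of
`traces r`, `traces s`. -/
def offWords (tr : A → S → S → Prop) (r s : S) : Set (List A) :=
  {w | w ∈ (traces tr r \ traces tr s) ∪ (traces tr s \ traces tr r) ∧
       ∀ v ∈ (traces tr r \ traces tr s) ∪ (traces tr s \ traces tr r),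
         w.length ≤ v.length}

/-- A labelled transition system is deterministic if each `→ᵃ` is a partial function. -/
def IsDet (tr : A → S → S → Prop) : Prop :=
  ∀ a r s₁ s₂, tr a r s₁ → tr a r s₂ → s₁ = s₂

/-- The infinite traces (ω-words enabled in a state). -/
def omTraces (tr : A → S → S → Prop) (s : S) : Set (ℕ → A) :=
  {α | ∃ f : ℕ → S, f 0 = s ∧ ∀ i, tr (α i) (f i) (f (i + 1))}

/-- Concatenation of a finite word with an infinite word. -/
def wApp (u : List A) (α : ℕ → A) : ℕ → A := fun i =>
  if h : i < u.length then u[i]'h else α (i - u.length)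


/-- Possibly-infinite terms over nonterminals `N` (and variables `x₁, x₂, …`),
represented as partial labelling functions on positions (`Sum.inr i` is the
variable `xᵢ`). -/
abbrev Tm (N : Type*) := List ℕ → Option (N ⊕ ℕ)

/-- Arity of a label: nonterminals have their arity, variables have arity 0. -/
def arityOf {N : Type*} (arity : N → ℕ) : N ⊕ ℕ → ℕ
  | Sum.inl X => arity X
  | Sum.inr _ => 0

/-- Well-formed term: the domain is nonempty (contains the root) and matches the
arities of the labels (which makes it prefix-closed). -/
def TmWF {N : Type*} (arity : N → ℕ) (E : Tm N) : Prop :=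
  (E []).isSome ∧
    ∀ γ i, (E (γ ++ [i])).isSome ↔ ∃ v, E γ = some v ∧ 1 ≤ i ∧ i ≤ arityOf arity v

/-- The subterm (occurrence) of `E` at position `γ`. -/
def subAt {N : Type*} (E : Tm N) (γ : List ℕ) : Tm N := fun δ => E (γ ++ δ)

/-- A term is regular if it has only finitely many subterms. -/
def TmRegular {N : Type*} (E : Tm N) : Prop := (Set.range (subAt E)).Finite

/-- A term is finite if its domain is finite. -/
def TmFinite {N : Type*} (E : Tm N) : Prop := {γ | (E γ).isSome}.Finite

/-- A term is ground if no variable occurs in it. -/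
def TmGround {N : Type*} (E : Tm N) : Prop := ∀ γ i, E γ ≠ some (Sum.inr i)

/-- `E = E(x₁,…,xₙ)` : all variables occurring in `E` are among `x₁,…,xₙ`. -/
def VarsBdd {N : Type*} (n : ℕ) (E : Tm N) : Prop :=
  ∀ γ i, E γ = some (Sum.inr i) → 1 ≤ i ∧ i ≤ n

/-- The term consisting of the single variable `xᵢ`. -/
def varTm (N : Type*) (i : ℕ) : Tm N := fun γ => if γ = [] then some (Sum.inr i) else none

open Classical in
/-- Substitution `E σ`: each occurrence of the variable `xᵢ` is replaced by `σ i`.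
(For a well-formed `E`, the decomposition of a position through a variable
occurrence is unique, so the choice is canonical.) -/
noncomputable def subst {N : Type*} (E : Tm N) (σ : ℕ → Tm N) : Tm N := fun γ =>
  if h : ∃ p : List ℕ × ℕ × List ℕ, γ = p.1 ++ p.2.2 ∧ E p.1 = some (Sum.inr p.2.1)
  then σ h.choose.2.1 h.choose.2.2
  else E γ

/-- The term `X G₁ G₂ …` with root `X` and `i`-th child `Gs i`. -/
def node {N : Type*} (X : N) (Gs : ℕ → Tm N) : Tm N := fun γ =>
  match γ with
  | [] => some (Sum.inl X)
  | i :: δ => Gs i δ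

/-- A first-order grammar: ranked nonterminals and a finite set of root-rewriting
rules `X x₁ … xₘ →ᵃ E` where `E` is a finite term with variables among `x₁,…,xₘ`,
`m = arity X`. -/
structure FOG (N A : Type*) where
  arity : N → ℕ
  rules : Set (N × A × Tm N)
  rules_fin : rules.Finite
  rules_wf : ∀ r ∈ rules, TmFinite r.2.2 ∧ TmWF arity r.2.2 ∧ VarsBdd (arity r.1) r.2.2

/-- A grammar is deterministic: at most one rule for each pair `(X, a)`. -/
def FOG.Det {N A : Type*} (G : FOG N A) : Prop :=
  ∀ X a E E', (X, a, E) ∈ G.rules → (X, a, E') ∈ G.rules → E = E'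

/-- The transition relation of the LTS `L_G` generated by the grammar `G` on terms:
each rule `X x₁ … xₘ →ᵃ E` gives `X G₁ … Gₘ →ᵃ E(G₁,…,Gₘ)`. -/
def gstep {N A : Type*} (G : FOG N A) (a : A) (s t : Tm N) : Prop :=
  ∃ X E Gs, (X, a, E) ∈ G.rules ∧ s = node X Gs ∧ t = subst E Gs


section Aux

variable {N : Type*} {ar : N → ℕ}

lemma isSome_prefix {E : Tm N} (hE : TmWF ar E) :
    ∀ (η γ : List ℕ), (E (γ ++ η)).isSome → (E γ).isSome := by
  intro η
  induction η using List.reverseRecOn with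
  | nil => intro γ h; simpa using h
  | append_singleton η j ih =>
      intro γ h
      rw [← List.append_assoc] at h
      rw [hE.2 (γ ++ η) j] at h
      obtain ⟨v, hv, _⟩ := h
      exact ih γ (by rw [hv]; rfl)

lemma var_ext_none {E : Tm N} (hE : TmWF ar E) {δ : List ℕ} {i : ℕ}
    (hδ : E δ = some (Sum.inr i)) (j : ℕ) (η : List ℕ) : E (δ ++ (j :: η)) = none := by
  by_contra h
  have h1 : (E ((δ ++ [j]) ++ η)).isSome := by
    rw [List.append_assoc]
    simpa using Option.ne_none_iff_isSome.mp h
  have h2 := isSome_prefix hE η (δ ++ [j]) h1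
  rw [hE.2 δ j] at h2
  obtain ⟨v, hv, h3, h4⟩ := h2
  rw [hδ] at hv
  cases hv
  simp [arityOf] at h4
  omega

lemma unique_var_prefix {E : Tm N} (hE : TmWF ar E) {δ₁ δ₂ : List ℕ} {i₁ i₂ : ℕ}
    {η₁ η₂ : List ℕ} (h1 : E δ₁ = some (Sum.inr i₁)) (h2 : E δ₂ = some (Sum.inr i₂))
    (h : δ₁ ++ η₁ = δ₂ ++ η₂) : δ₁ = δ₂ := by
  have a1 : δ₁ <+: δ₂ ++ η₂ := h ▸ List.prefix_append _ _
  have a2 : δ₂ <+: δ₂ ++ η₂ := List.prefix_append _ _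
  rcases List.prefix_or_prefix_of_prefix a1 a2 with hp | hp
  · obtain ⟨ρ, rfl⟩ := hp
    cases ρ with
    | nil => simp
    | cons j ρ' => rw [var_ext_none hE h1 j ρ'] at h2; cases h2
  · obtain ⟨ρ, rfl⟩ := hp
    cases ρ with
    | nil => simp
    | cons j ρ' => rw [var_ext_none hE h2 j ρ'] at h1; cases h1

/-- `γ` passes through (or is at) a variable occurrence of `E`. -/
def ThroughVar (E : Tm N) (γ : List ℕ) : Prop :=
  ∃ δ i η, γ = δ ++ η ∧ E δ = some (Sum.inr i)

lemma subst_through {E : Tm N} (hE : TmWF ar E) {δ : List ℕ} {i : ℕ}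
    (hδ : E δ = some (Sum.inr i)) (σ : ℕ → Tm N) (η : List ℕ) :
    subst E σ (δ ++ η) = σ i η := by
  have hex : ∃ p : List ℕ × ℕ × List ℕ, δ ++ η = p.1 ++ p.2.2 ∧ E p.1 = some (Sum.inr p.2.1) :=
    ⟨(δ, i, η), rfl, hδ⟩
  rw [subst, dif_pos hex]
  obtain ⟨h1, h2⟩ := hex.choose_spec
  have hδeq : hex.choose.1 = δ := unique_var_prefix hE h2 hδ h1.symm
  rw [hδeq] at h1 h2
  rw [hδ] at h2
  have hi : hex.choose.2.1 = i := by
    exact (Sum.inr.inj (Option.some.inj h2)).symm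
  have hη : hex.choose.2.2 = η := List.append_cancel_left h1.symm
  rw [hi, hη]

lemma subst_notthrough {E : Tm N} (σ : ℕ → Tm N) {γ : List ℕ}
    (h : ¬ ThroughVar E γ) : subst E σ γ = E γ := by
  rw [subst, dif_neg]
  rintro ⟨⟨δ, i, η⟩, h1, h2⟩
  exact h ⟨δ, i, η, h1, h2⟩

lemma wf_subAt {E : Tm N} (hE : TmWF ar E) {γ : List ℕ} (h : (E γ).isSome) :
    TmWF ar (subAt E γ) := by
  refine ⟨by simpa [subAt] using h, ?_⟩
  intro δ i
  have := hE.2 (γ ++ δ) i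
  simpa [subAt, List.append_assoc] using this

lemma varTm_wf (i : ℕ) : TmWF ar (varTm N i) := by
  constructor
  · simp [varTm]
  · intro γ j
    constructor
    · intro h
      simp [varTm] at h
    · rintro ⟨v, hv, h1, h2⟩
      simp only [varTm] at hv
      split at hv
      · cases hv; simp [arityOf] at h2; omega
      · cases hv

lemma wf_var_root {E : Tm N} (hE : TmWF ar E) {i : ℕ} (h : E [] = some (Sum.inr i)) :
    E = varTm N i := by
  funext γ
  cases γ with
  | nil => simpa [varTm] using h
  | cons j δ =>
      have := var_ext_none hE h j δ
      simpa [varTm] using this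

lemma subst_varTm (i : ℕ) (σ : ℕ → Tm N) : subst (varTm N i) σ = σ i := by
  funext γ
  have h : varTm N i [] = some (Sum.inr i) := by simp [varTm]
  have := subst_through (ar := fun _ : N => 0) (varTm_wf i) h σ γ
  simpa using this

lemma not_through_nil {E : Tm N} {X : N} (h : E [] = some (Sum.inl X)) :
    ¬ ThroughVar E [] := by
  rintro ⟨δ, i, η, h1, h2⟩
  have hδ : δ = [] := by
    have := List.append_eq_nil_iff.mp h1.symm; exact this.1
  rw [hδ, h] at h2
  cases h2

lemma subst_root {E : Tm N} {X : N} (h : E [] = some (Sum.inl X)) (σ : ℕ → Tm N) :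
    subst E σ [] = some (Sum.inl X) := by
  rw [subst_notthrough σ (not_through_nil h), h]

end Aux
section Aux2

variable {N : Type*} {ar : N → ℕ}

lemma subst_var_inv {E : Tm N} (hE : TmWF ar E) {τ : ℕ → Tm N} {ρ : List ℕ} {j : ℕ}
    (h : subst E τ ρ = some (Sum.inr j)) :
    ∃ δ i η, ρ = δ ++ η ∧ E δ = some (Sum.inr i) ∧ τ i η = some (Sum.inr j) := by
  by_cases ht : ThroughVar E ρ
  · obtain ⟨δ, i, η, rfl, hδ⟩ := ht
    rw [subst_through hE hδ] at h
    exact ⟨δ, i, η, rfl, hδ, h⟩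
  · rw [subst_notthrough τ ht] at h
    exact absurd ⟨ρ, j, [], (List.append_nil ρ).symm, h⟩ ht

lemma prefix_snoc {δ γ : List ℕ} {j : ℕ} {η : List ℕ} (h : δ ++ η = γ ++ [j]) :
    δ = γ ++ [j] ∨ δ <+: γ := by
  cases η with
  | nil => left; simpa using h
  | cons e η' =>
      right
      have hp : δ <+: γ ++ [j] := ⟨e :: η', h⟩
      have hp2 : γ <+: γ ++ [j] := List.prefix_append _ _
      have hlen : δ.length ≤ γ.length := by
        have := congrArg List.length h
        simp at this
        omega
      exact List.prefix_of_prefix_length_le hp hp2 hlen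

lemma wf_subst {E : Tm N} (hE : TmWF ar E) {σ : ℕ → Tm N}
    (hσ : ∀ i, (∃ δ, E δ = some (Sum.inr i)) → TmWF ar (σ i)) :
    TmWF ar (subst E σ) := by
  constructor
  · have h0 := hE.1
    rw [Option.isSome_iff_exists] at h0
    obtain ⟨v, hv⟩ := h0
    cases v with
    | inl X => rw [subst_root hv]; rfl
    | inr i =>
        have hEv : E = varTm N i := wf_var_root hE hv
        rw [hEv, subst_varTm]
        exact (hσ i ⟨[], hv⟩).1
  · intro γ j
    by_cases ht : ThroughVar E γ
    · obtain ⟨δ, i, η, rfl, hδ⟩ := ht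
      rw [List.append_assoc, subst_through hE hδ, subst_through hE hδ]
      exact (hσ i ⟨δ, hδ⟩).2 η j
    · rw [subst_notthrough σ ht]
      by_cases hvj : ∃ i', E (γ ++ [j]) = some (Sum.inr i')
      · obtain ⟨i', hij⟩ := hvj
        have hth : subst E σ (γ ++ [j]) = σ i' [] := by
          have := subst_through hE hij σ []
          simpa using this
        rw [hth]
        have hsome : (σ i' []).isSome := (hσ i' ⟨γ ++ [j], hij⟩).1
        constructor
        · intro _
          have := (hE.2 γ j).mp (by rw [hij]; rfl)
          exact this
        · intro _; exact hsome
      · have hnt : ¬ ThroughVar E (γ ++ [j]) := by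
          rintro ⟨δ, i, η, heq, hδ⟩
          rcases prefix_snoc heq.symm with h | h
          · exact hvj ⟨i, h ▸ hδ⟩
          · obtain ⟨ρ, rfl⟩ := h
            exact ht ⟨δ, i, ρ, rfl, hδ⟩
        rw [subst_notthrough σ hnt]
        exact hE.2 γ j

lemma subst_subst {E : Tm N} (hE : TmWF ar E) {τ : ℕ → Tm N}
    (hτ : ∀ i, (∃ δ, E δ = some (Sum.inr i)) → TmWF ar (τ i)) (σ : ℕ → Tm N) :
    subst (subst E τ) σ = subst E (fun i => subst (τ i) σ) := by
  have hW : TmWF ar (subst E τ) := wf_subst hE hτ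
  funext γ
  by_cases h1 : ThroughVar E γ
  · obtain ⟨δ, i, η, rfl, hδ⟩ := h1
    have hτi := hτ i ⟨δ, hδ⟩
    rw [subst_through hE hδ (fun i => subst (τ i) σ) η]
    by_cases h2 : ThroughVar (τ i) η
    · obtain ⟨δ₂, j, η₂, rfl, hδ₂⟩ := h2
      rw [subst_through hτi hδ₂ σ η₂]
      have hmid : subst E τ (δ ++ δ₂) = some (Sum.inr j) := by
        rw [subst_through hE hδ τ δ₂]; exact hδ₂
      rw [← List.append_assoc, subst_through hW hmid σ η₂]
    · rw [subst_notthrough σ h2]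
      have hnt : ¬ ThroughVar (subst E τ) (δ ++ η) := by
        rintro ⟨ρ, j, ζ, heq, hρ⟩
        obtain ⟨δ', i', η', rfl, hδ', hτ'⟩ := subst_var_inv hE hρ
        have hδδ : δ' = δ :=
          unique_var_prefix hE hδ' hδ (η₁ := η' ++ ζ) (η₂ := η)
            (by rw [← List.append_assoc]; exact heq.symm)
        subst hδδ
        rw [hδ] at hδ'
        cases Option.some.inj hδ'
        have hηeq : η' ++ ζ = η := by
          rw [List.append_assoc] at heq
          exact (List.append_cancel_left heq).symm
        exact h2 ⟨η', j, ζ, hηeq.symm, hτ'⟩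
      rw [subst_notthrough σ hnt, subst_through hE hδ τ η]
  · have hnt : ¬ ThroughVar (subst E τ) γ := by
      rintro ⟨ρ, j, ζ, heq, hρ⟩
      obtain ⟨δ', i', η', rfl, hδ', _⟩ := subst_var_inv hE hρ
      exact h1 ⟨δ', i', η' ++ ζ, by rw [heq, List.append_assoc], hδ'⟩
    rw [subst_notthrough σ hnt, subst_notthrough τ h1,
        subst_notthrough (fun i => subst (τ i) σ) h1]

lemma subst_congr_occ {E : Tm N} (hE : TmWF ar E) {σ σ' : ℕ → Tm N}
    (h : ∀ i, (∃ δ, E δ = some (Sum.inr i)) → σ i = σ' i) :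
    subst E σ = subst E σ' := by
  funext γ
  by_cases ht : ThroughVar E γ
  · obtain ⟨δ, i, η, rfl, hδ⟩ := ht
    rw [subst_through hE hδ, subst_through hE hδ, h i ⟨δ, hδ⟩]
  · rw [subst_notthrough σ ht, subst_notthrough σ' ht]

lemma subst_cons {E : Tm N} (hE : TmWF ar E) {X : N} (hroot : E [] = some (Sum.inl X))
    (σ : ℕ → Tm N) (i : ℕ) (δ : List ℕ) :
    subst E σ (i :: δ) = subst (subAt E [i]) σ δ := by
  by_cases ht : ThroughVar E (i :: δ)
  · obtain ⟨δ₀, j, η, heq, hvar⟩ := ht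
    cases δ₀ with
    | nil => rw [hroot] at hvar; cases hvar
    | cons i₀ δ₁ =>
        have hi₀ : i₀ = i := by
          have := congrArg (fun l => List.head? l) heq
          simpa using this.symm
        subst hi₀
        have hδeq : δ = δ₁ ++ η := by
          have : i₀ :: δ = i₀ :: (δ₁ ++ η) := heq
          exact List.cons.inj this |>.2
        have hchild : subAt E [i₀] δ₁ = some (Sum.inr j) := by
          simpa [subAt] using hvar
        have hwfchild : TmWF ar (subAt E [i₀]) := by
          apply wf_subAt hE
          have : (E ([i₀] ++ δ₁)).isSome := by
            simp only [List.singleton_append]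
            rw [hvar]; rfl
          exact isSome_prefix hE δ₁ [i₀] this
        rw [hδeq]
        rw [show (i₀ :: (δ₁ ++ η)) = (i₀ :: δ₁) ++ η by simp]
        have hv2 : E (i₀ :: δ₁) = some (Sum.inr j) := hvar
        rw [subst_through hE hv2 σ η, subst_through hwfchild hchild σ η]
  · have hnt2 : ¬ ThroughVar (subAt E [i]) δ := by
      rintro ⟨δ₁, j, η, rfl, hv⟩
      exact ht ⟨i :: δ₁, j, η, rfl, by simpa [subAt] using hv⟩
    rw [subst_notthrough σ ht, subst_notthrough σ hnt2]
    simp [subAt]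

end Aux2
section Aux3

variable {N A : Type*}

lemma node_eta {s : Tm N} {X : N} (h : s [] = some (Sum.inl X)) :
    s = node X (fun i => subAt s [i]) := by
  funext γ
  cases γ with
  | nil => simpa [node] using h
  | cons i δ => simp [node, subAt]

lemma node_comp {s : Tm N} {X : N} {Gs : ℕ → Tm N} (h : s = node X Gs) (i : ℕ) :
    Gs i = fun δ => s (i :: δ) := by
  funext δ
  rw [h]
  rfl

lemma rule_wf (G : FOG N A) {X : N} {a : A} {Er : Tm N} (h : (X, a, Er) ∈ G.rules) :
    TmWF G.arity Er ∧ VarsBdd (G.arity X) Er :=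
  ⟨(G.rules_wf _ h).2.1, (G.rules_wf _ h).2.2⟩

lemma child_wf {s : Tm N} {ar : N → ℕ} (hs : TmWF ar s) {X : N}
    (hroot : s [] = some (Sum.inl X)) {i : ℕ} (h1 : 1 ≤ i) (h2 : i ≤ ar X) :
    TmWF ar (subAt s [i]) := by
  apply wf_subAt hs
  have := (hs.2 [] i).mpr ⟨Sum.inl X, hroot, h1, h2⟩
  simpa using this

lemma gstep_subst_iff (G : FOG N A) {E : Tm N} (hE : TmWF G.arity E) {X : N}
    (hroot : E [] = some (Sum.inl X)) (σ : ℕ → Tm N) (a : A) (t : Tm N) :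
    gstep G a (subst E σ) t ↔ ∃ E₁, gstep G a E E₁ ∧ t = subst E₁ σ := by
  constructor
  · rintro ⟨Y, Er, Gs, hrule, hnode, rfl⟩
    have hY : Y = X := by
      have h1 : subst E σ [] = some (Sum.inl X) := subst_root hroot σ
      rw [hnode] at h1
      exact Sum.inl.inj (Option.some.inj h1)
    subst hY
    have hGs : ∀ i, Gs i = subst (subAt E [i]) σ := by
      intro i
      funext δ
      rw [node_comp hnode i]
      exact subst_cons hE hroot σ i δ
    obtain ⟨hErwf, hErvars⟩ := rule_wf G hrule
    have hτ : ∀ i, (∃ δ, Er δ = some (Sum.inr i)) → TmWF G.arity (subAt E [i]) := by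
      rintro i ⟨δ, hδ⟩
      obtain ⟨h1, h2⟩ := hErvars δ i hδ
      exact child_wf hE hroot h1 h2
    refine ⟨subst Er (fun i => subAt E [i]), ⟨Y, Er, fun i => subAt E [i], hrule, node_eta hroot, rfl⟩, ?_⟩
    have : Gs = fun i => subst (subAt E [i]) σ := funext hGs
    rw [this, ← subst_subst hErwf hτ σ]
  · rintro ⟨E₁, ⟨Y, Er, Gs, hrule, hnodeE, rfl⟩, rfl⟩
    have hY : Y = X := by
      have := congrArg (fun f : Tm N => f []) hnodeE
      simp only [node] at this
      rw [hroot] at this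
      exact (Sum.inl.inj (Option.some.inj this)).symm
    subst hY
    obtain ⟨hErwf, hErvars⟩ := rule_wf G hrule
    have hGseq : ∀ i, Gs i = subAt E [i] := by
      intro i
      funext δ
      rw [node_comp hnodeE i]
      simp [subAt]
    have hτ : ∀ i, (∃ δ, Er δ = some (Sum.inr i)) → TmWF G.arity (Gs i) := by
      rintro i ⟨δ, hδ⟩
      obtain ⟨h1, h2⟩ := hErvars δ i hδ
      rw [hGseq i]
      exact child_wf hE hroot h1 h2
    refine ⟨Y, Er, fun i => subst (Gs i) σ, hrule, ?_, (subst_subst hErwf hτ σ)⟩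
    funext γ
    cases γ with
    | nil => simp only [node]; exact subst_root hroot σ
    | cons i δ =>
        show subst E σ (i :: δ) = subst (Gs i) σ δ
        rw [subst_cons hE hroot σ i δ, hGseq i]

lemma wf_gstep (G : FOG N A) {s t : Tm N} (hs : TmWF G.arity s) {a : A}
    (h : gstep G a s t) : TmWF G.arity t := by
  obtain ⟨X, Er, Gs, hrule, hnode, rfl⟩ := h
  have hroot : s [] = some (Sum.inl X) := by rw [hnode]; rfl
  obtain ⟨hErwf, hErvars⟩ := rule_wf G hrule
  apply wf_subst hErwf
  rintro i ⟨δ, hδ⟩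
  obtain ⟨h1, h2⟩ := hErvars δ i hδ
  have := child_wf hs hroot h1 h2
  rwa [show subAt s [i] = Gs i by funext δ'; rw [node_comp hnode i]; rfl] at this

lemma no_gstep_var (G : FOG N A) {s t : Tm N} {i : ℕ} (h : s [] = some (Sum.inr i))
    {a : A} : ¬ gstep G a s t := by
  rintro ⟨X, Er, Gs, _, hnode, _⟩
  rw [hnode] at h
  cases h

lemma varTm_inj {i j : ℕ} (h : varTm N i = varTm N j) : i = j := by
  have := congrArg (fun f : Tm N => f []) h
  simpa [varTm] using this

lemma steps_append {S : Type*} {tr : A → S → S → Prop} :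
    ∀ (u v : List A) (s t : S), Steps tr (u ++ v) s t ↔ ∃ m, Steps tr u s m ∧ Steps tr v m t := by
  intro u
  induction u with
  | nil =>
      intro v s t
      simp only [List.nil_append, Steps]
      constructor
      · intro h; exact ⟨s, rfl, h⟩
      · rintro ⟨m, rfl, h⟩; exact h
  | cons a u ih =>
      intro v s t
      simp only [List.cons_append, Steps]
      constructor
      · rintro ⟨s', h1, h2⟩
        obtain ⟨m, h3, h4⟩ := (ih v s' t).mp h2
        exact ⟨m, ⟨s', h1, h3⟩, h4⟩
      · rintro ⟨m, ⟨s', h1, h3⟩, h4⟩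
        exact ⟨s', h1, (ih v s' t).mpr ⟨m, h3, h4⟩⟩

lemma mem_traces_nil {S : Type*} {tr : A → S → S → Prop} (s : S) : [] ∈ traces tr s :=
  ⟨s, rfl⟩

lemma mem_traces_cons {S : Type*} {tr : A → S → S → Prop} {a : A} {w : List A} {s : S} :
    a :: w ∈ traces tr s ↔ ∃ s', tr a s s' ∧ w ∈ traces tr s' := by
  constructor
  · rintro ⟨t, s', h1, h2⟩; exact ⟨s', h1, t, h2⟩
  · rintro ⟨s', h1, t, h2⟩; exact ⟨t, s', h1, h2⟩

lemma mem_traces_subst (G : FOG N A) {σ : ℕ → Tm N} (hσ : ∀ i, TmWF G.arity (σ i)) :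
    ∀ (w : List A) (E : Tm N), TmWF G.arity E →
      (w ∈ traces (gstep G) (subst E σ) ↔
        w ∈ traces (gstep G) E ∨
          ∃ u v i, w = u ++ v ∧ Steps (gstep G) u E (varTm N i) ∧ v ∈ traces (gstep G) (σ i)) := by
  intro w
  induction w with
  | nil =>
      intro E hE
      constructor
      · intro _; exact Or.inl (mem_traces_nil E)
      · intro _; exact mem_traces_nil _
  | cons a w ih =>
      intro E hE
      have h0 := hE.1
      rw [Option.isSome_iff_exists] at h0
      obtain ⟨v0, hv0⟩ := h0
      cases v0 with
      | inl X =>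
          constructor
          · intro h
            rw [mem_traces_cons] at h
            obtain ⟨t, hstep, hrest⟩ := h
            obtain ⟨E₁, hstE, rfl⟩ := (gstep_subst_iff G hE hv0 σ a t).mp hstep
            have hE₁ : TmWF G.arity E₁ := wf_gstep G hE hstE
            rcases (ih E₁ hE₁).mp hrest with h | ⟨u, v, i, rfl, hsteps, hv⟩
            · exact Or.inl (mem_traces_cons.mpr ⟨E₁, hstE, h⟩)
            · exact Or.inr ⟨a :: u, v, i, rfl, ⟨E₁, hstE, hsteps⟩, hv⟩
          · rintro (h | ⟨u, v, i, heq, hsteps, hv⟩)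
            · rw [mem_traces_cons] at h
              obtain ⟨E₁, hstE, hrest⟩ := h
              have hE₁ : TmWF G.arity E₁ := wf_gstep G hE hstE
              refine mem_traces_cons.mpr ⟨subst E₁ σ, ?_, ?_⟩
              · exact (gstep_subst_iff G hE hv0 σ a _).mpr ⟨E₁, hstE, rfl⟩
              · exact (ih E₁ hE₁).mpr (Or.inl hrest)
            · cases u with
              | nil =>
                  have hvE : varTm N i = E := hsteps
                  have : some (Sum.inr i) = some (Sum.inl X) := by
                    rw [← hv0, ← hvE]; simp [varTm]
                  simp at this
              | cons a' u' =>
                  obtain ⟨rfl, hwE⟩ := List.cons.inj heq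
                  subst hwE
                  obtain ⟨E₁, hstE, hrest⟩ := hsteps
                  have hE₁ : TmWF G.arity E₁ := wf_gstep G hE hstE
                  have hst' := (gstep_subst_iff G hE hv0 σ a _).mpr ⟨E₁, hstE, rfl⟩
                  refine mem_traces_cons.mpr ⟨subst E₁ σ, hst', ?_⟩
                  exact (ih E₁ hE₁).mpr (Or.inr ⟨u', v, i, rfl, hrest, hv⟩)
      | inr i =>
          have hEv : E = varTm N i := wf_var_root hE hv0
          rw [hEv, subst_varTm]
          constructor
          · intro h
            exact Or.inr ⟨[], a :: w, i, rfl, rfl, h⟩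
          · rintro (h | ⟨u, v, j, heq, hsteps, hv⟩)
            · rw [mem_traces_cons] at h
              obtain ⟨s', hst, _⟩ := h
              exact absurd hst (no_gstep_var G (show (varTm N i) [] = some (Sum.inr i) by simp [varTm]))
            · cases u with
              | nil =>
                  have hj : varTm N j = varTm N i := hsteps
                  rw [varTm_inj hj] at hv
                  rw [heq]
                  exact hv
              | cons a' u' =>
                  obtain ⟨s', hst, _⟩ := hsteps
                  exact absurd hst (no_gstep_var G (show (varTm N i) [] = some (Sum.inr i) by simp [varTm]))

end Aux3
section Aux4

variable {N A : Type*}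

lemma tracesLe_subst_subset (G : FOG N A) {E : Tm N} (hE : TmWF G.arity E)
    {σ σ' : ℕ → Tm N} (hσ : ∀ i, TmWF G.arity (σ i)) (hσ' : ∀ i, TmWF G.arity (σ' i))
    {k : ℕ} (h : ∀ i, tracesLe (gstep G) k (σ i) ⊆ tracesLe (gstep G) k (σ' i)) :
    tracesLe (gstep G) k (subst E σ) ⊆ tracesLe (gstep G) k (subst E σ') := by
  rintro w ⟨hw, hlen⟩
  refine ⟨?_, hlen⟩
  rcases (mem_traces_subst G hσ w E hE).mp hw with h1 | ⟨u, v, i, rfl, hsteps, hv⟩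
  · exact (mem_traces_subst G hσ' w E hE).mpr (Or.inl h1)
  · have hvlen : v.length ≤ k := by
      have := @List.length_append _ u v
      omega
    have hv' := h i ⟨hv, hvlen⟩
    exact (mem_traces_subst G hσ' _ E hE).mpr (Or.inr ⟨u, v, i, rfl, hsteps, hv'.1⟩)

lemma simK_subst (G : FOG N A) {E : Tm N} (hE : TmWF G.arity E)
    {σ σ' : ℕ → Tm N} (hσ : ∀ i, TmWF G.arity (σ i)) (hσ' : ∀ i, TmWF G.arity (σ' i))
    {k : ℕ} (h : ∀ i, SimK (gstep G) k (σ i) (σ' i)) :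
    SimK (gstep G) k (subst E σ) (subst E σ') := by
  apply Set.Subset.antisymm
  · exact tracesLe_subst_subset G hE hσ hσ' (fun i => (h i).le)
  · exact tracesLe_subst_subset G hE hσ' hσ (fun i => (h i).ge)

lemma mem_traces_of_agree (G : FOG N A) :
    ∀ (w : List A) (s t : Tm N), (∀ γ : List ℕ, γ.length ≤ w.length → s γ = t γ) →
      w ∈ traces (gstep G) s → w ∈ traces (gstep G) t := by
  intro w
  induction w with
  | nil => intro s t _ _; exact mem_traces_nil t
  | cons a w ih =>
      intro s t hag hw
      rw [mem_traces_cons] at hw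
      obtain ⟨s₁, hstep, hrest⟩ := hw
      obtain ⟨X, Er, Gs, hrule, hs, rfl⟩ := hstep
      have hroott : t [] = some (Sum.inl X) := by
        rw [← hag [] (by simp), hs]; rfl
      have hstept : gstep G a t (subst Er (fun i => subAt t [i])) :=
        ⟨X, Er, fun i => subAt t [i], hrule, node_eta hroott, rfl⟩
      obtain ⟨hErwf, _⟩ := rule_wf G hrule
      refine mem_traces_cons.mpr ⟨subst Er (fun i => subAt t [i]), hstept, ?_⟩
      apply ih (subst Er Gs) _ _ hrest
      intro γ hγ
      by_cases ht : ThroughVar Er γ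
      · obtain ⟨δ, i, η, rfl, hδ⟩ := ht
        rw [subst_through hErwf hδ Gs η, subst_through hErwf hδ (fun i => subAt t [i]) η]
        have hGs : Gs i η = s (i :: η) := by rw [node_comp hs i]
        have hGt : subAt t [i] η = t (i :: η) := rfl
        rw [hGs, hGt]
        apply hag
        simp only [List.length_cons, List.length_append] at hγ ⊢
        omega
      · rw [subst_notthrough Gs ht, subst_notthrough (fun i => subAt t [i]) ht]

lemma simK_of_agree (G : FOG N A) {s t : Tm N} (k : ℕ)
    (h : ∀ γ : List ℕ, γ.length ≤ k → s γ = t γ) : SimK (gstep G) k s t := by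
  apply Set.ext
  intro w
  constructor
  · rintro ⟨hw, hl⟩
    exact ⟨mem_traces_of_agree G w s t (fun γ hγ => h γ (hγ.trans hl)) hw, hl⟩
  · rintro ⟨hw, hl⟩
    exact ⟨mem_traces_of_agree G w t s (fun γ hγ => (h γ (hγ.trans hl)).symm) hw, hl⟩

end Aux4
section Main

variable {N A : Type*}

/-- Substitution of a single term for the variable `x₁`. -/
noncomputable def fsub (F s : Tm N) : Tm N := subst F (fun j => if j = 1 then s else varTm N j)

lemma agree_fsub {ar : N → ℕ} {F : Tm N} (hFwf : TmWF ar F) (hFvars : VarsBdd 1 F)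
    {X : N} (hFroot : F [] = some (Sum.inl X)) {s t : Tm N} {m : ℕ}
    (h : ∀ γ : List ℕ, γ.length ≤ m → s γ = t γ) :
    ∀ γ : List ℕ, γ.length ≤ m + 1 → fsub F s γ = fsub F t γ := by
  intro γ hγ
  unfold fsub
  by_cases ht : ThroughVar F γ
  · obtain ⟨δ, i, η, rfl, hδ⟩ := ht
    obtain ⟨h1, h2⟩ := hFvars δ i hδ
    have hi : i = 1 := le_antisymm h2 h1
    subst hi
    have hδne : δ ≠ [] := by rintro rfl; rw [hFroot] at hδ; cases hδ
    rw [subst_through hFwf hδ _ η, subst_through hFwf hδ _ η]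
    simp only [if_pos rfl]
    apply h
    have h1le : 1 ≤ δ.length := by
      cases δ with
      | nil => exact absurd rfl hδne
      | cons _ _ => simp
    simp only [List.length_append] at hγ
    omega
  · rw [subst_notthrough _ ht, subst_notthrough _ ht]

lemma sim_key {G : FOG N A} {F : Tm N} (hFwf : TmWF G.arity F) (hFvars : VarsBdd 1 F)
    (hFne : F ≠ varTm N 1) {W : Tm N} (hWwf : TmWF G.arity W)
    (hWeq : W = fsub F W) {T : Tm N} (hTwf : TmWF G.arity T) (k : ℕ)
    (h : SimK (gstep G) k T (fsub F T)) : SimK (gstep G) k T W := by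
  -- the root of F is a nonterminal
  obtain ⟨X, hFroot⟩ : ∃ X, F [] = some (Sum.inl X) := by
    have h0 := hFwf.1
    rw [Option.isSome_iff_exists] at h0
    obtain ⟨v, hv⟩ := h0
    cases v with
    | inl X => exact ⟨X, hv⟩
    | inr i =>
        obtain ⟨h1, h2⟩ := hFvars [] i hv
        have : i = 1 := le_antisymm h2 h1
        subst this
        exact absurd (wf_var_root hFwf hv) hFne
  have hσwf : ∀ s : Tm N, TmWF G.arity s →
      ∀ j, TmWF G.arity ((fun j => if j = 1 then s else varTm N j) j) := by
    intro s hs j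
    dsimp only
    by_cases hj : j = 1
    · rw [if_pos hj]; exact hs
    · rw [if_neg hj]; exact varTm_wf j
  have hfswf : ∀ s : Tm N, TmWF G.arity s → TmWF G.arity (fsub F s) := by
    intro s hs
    exact wf_subst hFwf (fun i _ => hσwf s hs i)
  have hiterwf : ∀ n, TmWF G.arity ((fsub F)^[n] T) := by
    intro n
    induction n with
    | zero => exact hTwf
    | succ n ih => rw [Function.iterate_succ_apply']; exact hfswf _ ih
  have hsimfs : ∀ s t : Tm N, TmWF G.arity s → TmWF G.arity t →
      SimK (gstep G) k s t → SimK (gstep G) k (fsub F s) (fsub F t) := by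
    intro s t hs ht hst
    apply simK_subst G hFwf (hσwf s hs) (hσwf t ht)
    intro i
    by_cases hi : i = 1
    · simp only [hi, if_pos rfl]; exact hst
    · simp only [if_neg hi]; rfl
  have chain : ∀ n, SimK (gstep G) k T ((fsub F)^[n] T) ∧
      SimK (gstep G) k ((fsub F)^[n] T) ((fsub F)^[n + 1] T) := by
    intro n
    induction n with
    | zero => exact ⟨rfl, h⟩
    | succ n ih =>
        have hstep : SimK (gstep G) k ((fsub F)^[n + 1] T) ((fsub F)^[n + 2] T) := by
          have := hsimfs _ _ (hiterwf n) (hiterwf (n + 1)) ih.2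
          rwa [← Function.iterate_succ_apply' (fsub F) n T,
               ← Function.iterate_succ_apply' (fsub F) (n + 1) T] at this
        exact ⟨ih.1.trans ih.2, hstep⟩
  have hag : ∀ n (s t : Tm N), ∀ γ : List ℕ, γ.length ≤ n →
      (fsub F)^[n + 1] s γ = (fsub F)^[n + 1] t γ := by
    intro n
    induction n with
    | zero =>
        intro s t γ hγ
        have : γ = [] := List.length_eq_zero_iff.mp (Nat.le_zero.mp hγ)
        subst this
        have e1 : (fsub F)^[0 + 1] s = fsub F s := rfl
        have e2 : (fsub F)^[0 + 1] t = fsub F t := rfl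
        rw [e1, e2]
        show subst F _ [] = subst F _ []
        rw [subst_root hFroot, subst_root hFroot]
    | succ n ih =>
        intro s t γ hγ
        rw [Function.iterate_succ_apply' (fsub F) (n + 1) s,
            Function.iterate_succ_apply' (fsub F) (n + 1) t]
        exact agree_fsub hFwf hFvars hFroot (ih s t) γ hγ
  have hWfix : ∀ n, (fsub F)^[n] W = W := Function.iterate_fixed hWeq.symm
  have s1 : SimK (gstep G) k T ((fsub F)^[k + 1] T) := (chain (k + 1)).1
  have s2 : SimK (gstep G) k ((fsub F)^[k + 1] T) ((fsub F)^[k + 1] W) :=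
    simK_of_agree G k (hag k T W)
  rw [hWfix (k + 1)] at s2
  exact s1.trans s2

lemma simK_of_sim {S : Type*} {tr : A → S → S → Prop} {r s : S} (h : Sim tr r s) (m : ℕ) :
    SimK tr m r s := by
  unfold SimK tracesLe
  rw [show traces tr r = traces tr s from h]

lemma sim_of_forall_simK {S : Type*} {tr : A → S → S → Prop} {r s : S}
    (h : ∀ m, SimK tr m r s) : Sim tr r s := by
  apply Set.ext
  intro w
  constructor
  · intro hw
    exact (((h w.length).le) ⟨hw, le_refl _⟩).1
  · intro hw
    exact (((h w.length).ge) ⟨hw, le_refl _⟩).1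

end Main
/-- for `F = F(x₁) ≠ x₁` and a regular term `W` with `W = F(W)`
(the limit `F[F/x₁]^ω`): `T ∼ₖ F(T)` implies `T ∼ₖ W`, and `T ∼ F(T)` implies `T ∼ W`. -/
theorem simK_limit_of_simK_subst {N A : Type*} [Fintype N] [Fintype A] (G : FOG N A)
    (F : Tm N) (hFreg : TmRegular F) (hFwf : TmWF G.arity F) (hFvars : VarsBdd 1 F)
    (hFne : F ≠ varTm N 1)
    (W : Tm N) (hWreg : TmRegular W) (hWwf : TmWF G.arity W)
    (hWeq : W = subst F (fun j => if j = 1 then W else varTm N j))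
    (T : Tm N) (hT : TmGround T ∧ TmRegular T ∧ TmWF G.arity T) (k : ℕ) :
    (SimK (gstep G) k T (subst F (fun j => if j = 1 then T else varTm N j)) →
      SimK (gstep G) k T W) ∧
    (Sim (gstep G) T (subst F (fun j => if j = 1 then T else varTm N j)) →
      Sim (gstep G) T W) := by
  constructor
  · intro h
    exact sim_key hFwf hFvars hFne hWwf hWeq hT.2.2 k h
  · intro h
    apply sim_of_forall_simK
    intro m
    exact sim_key hFwf hFvars hFne hWwf hWeq hT.2.2 m (simK_of_sim h m)

end FOGPaper
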